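/- Let p_t(y) = (2πt)^{−1/2} e^{−y²/(2t)} for t > 0, y ∈ ℝ, and define Q and V as follows: Q((s,x),(t,y)) = ∫₀^{s∧t} p_{s+t−2r}(x − y) dr, and V(s,t,x,y) = Q((s,x),(s,x)) + Q((t,x),(t,x)) + Q((s,y),(s,y)) + Q((t,y),(t,y)) − 2Q((s,x),(t,x)) − 2Q((s,x),(s,y)) + 2Q((s,x),(t,y)) + 2Q((t,x),(s,y)) − 2Q((t,x),(t,y)) − 2Q((s,y),(t,y)). Then for all s, t > 0 and x, y ∈ ℝ: (i) V(s,t,x,y) ≤ 2∫₀^{|s−t|} [p_r(0) − p_r(x−y)] dr, and (ii) for every α ∈ [0, 1/2] there exists a constant c_α < ∞ (independent of s, t, x, y) such that V(s,t,x,y) ≤ c_α |x − y|^{2α} |s − t|^{1/2 − α}. -/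

import Mathlib

open MeasureTheory Set

/-- One-dimensional heat kernel `p_t(y) = (2πt)^{−1/2} e^{−y²/(2t)}`. -/
noncomputable def heatK (t y : ℝ) : ℝ :=
  (Real.sqrt (2 * Real.pi * t))⁻¹ * Real.exp (-y ^ 2 / (2 * t))

/-- Covariance `Q((s,x),(t,y)) = ∫₀^{s∧t} p_{s+t−2r}(x−y) dr` of the mild solution of
the stochastic heat equation with additive space-time white noise. -/
noncomputable def heatQ (s x t y : ℝ) : ℝ :=
  ∫ r in Set.Ioc (0:ℝ) (min s t), heatK (s + t - 2 * r) (x - y)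

/-- Second moment `V(s,t,x,y) = E[(u(t,y) − u(t,x) − u(s,y) + u(s,x))²]` of the
rectangular increment, expressed through the covariance `Q`. -/
noncomputable def heatV (s t x y : ℝ) : ℝ :=
  heatQ s x s x + heatQ t x t x + heatQ s y s y + heatQ t y t y
    - 2 * heatQ s x t x - 2 * heatQ s x s y + 2 * heatQ s x t y
    + 2 * heatQ t x s y - 2 * heatQ t x t y - 2 * heatQ s y t y

lemma heatK_nonneg (t y : ℝ) : 0 ≤ heatK t y := by
  unfold heatK; positivity

lemma heatK_le_zero' (t y : ℝ) (ht : 0 < t) : heatK t y ≤ heatK t 0 := by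
  unfold heatK
  have h1 : Real.exp (-y ^ 2 / (2 * t)) ≤ 1 := by
    rw [Real.exp_le_one_iff]
    apply div_nonpos_of_nonpos_of_nonneg <;> nlinarith [sq_nonneg y]
  have h2 : (-(0:ℝ) ^ 2 / (2 * t)) = 0 := by norm_num
  rw [h2, Real.exp_zero, mul_one]
  exact mul_le_of_le_one_right (by positivity) h1

lemma heatK_zero_eq (t : ℝ) : heatK t 0 = (Real.sqrt (2 * Real.pi))⁻¹ * t ^ (-(1/2) : ℝ) := by
  unfold heatK
  rcases le_or_gt t 0 with h | h
  · rcases eq_or_lt_of_le h with rfl | h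
    · simp
    · rw [Real.sqrt_eq_zero_of_nonpos (by nlinarith [Real.pi_pos]), Real.rpow_def_of_neg h]
      have h2 : Real.cos ((2:ℝ)⁻¹ * Real.pi) = 0 := by
        rw [show ((2:ℝ)⁻¹ * Real.pi) = Real.pi/2 by ring, Real.cos_pi_div_two]
      simp [h2]
  · rw [Real.sqrt_mul (by positivity), Real.sqrt_eq_rpow t, mul_inv,
      ← Real.rpow_neg h.le]
    norm_num

lemma heatK_le_rpow (t y : ℝ) (ht : 0 < t) :
    heatK t y ≤ (Real.sqrt (2 * Real.pi))⁻¹ * t ^ (-(1/2) : ℝ) := by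
  rw [← heatK_zero_eq]; exact heatK_le_zero' t y ht

lemma heatK_measurable (y : ℝ) : Measurable (fun t => heatK t y) := by
  unfold heatK
  fun_prop

lemma heatK_intervalIntegrable (y a b : ℝ) (ha : 0 ≤ a) (hb : 0 ≤ b) :
    IntervalIntegrable (fun t => heatK t y) volume a b := by
  have key : ∀ u v : ℝ, 0 ≤ u → u ≤ v → IntervalIntegrable (fun t => heatK t y) volume u v := by
    intro u v hu huv
    have hmaj : IntervalIntegrable (fun t : ℝ => (Real.sqrt (2 * Real.pi))⁻¹ * t ^ (-(1/2) : ℝ))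
        volume u v :=
      (intervalIntegral.intervalIntegrable_rpow' (by norm_num)).const_mul _
    apply hmaj.mono_fun (heatK_measurable y).aestronglyMeasurable.restrict
    filter_upwards [ae_restrict_mem measurableSet_uIoc] with t ht
    rw [uIoc_of_le huv] at ht
    have ht0 : 0 < t := lt_of_le_of_lt hu ht.1
    rw [Real.norm_eq_abs, Real.norm_eq_abs, abs_of_nonneg (heatK_nonneg t y),
      abs_of_nonneg (by positivity)]
    exact heatK_le_rpow t y ht0
  rcases le_total a b with hab | hab
  · exact key a b ha hab
  · exact (key b a hb hab).symm

lemma heatQ_eq (s x t y : ℝ) (hs : 0 < s) (ht : 0 < t) :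
    heatQ s x t y = (2:ℝ)⁻¹ * ∫ u in (|s - t|)..(s + t), heatK u (x - y) := by
  unfold heatQ
  rw [← intervalIntegral.integral_of_le (le_min hs.le ht.le : (0:ℝ) ≤ min s t)]
  have := intervalIntegral.integral_comp_sub_mul (a := 0) (b := min s t)
    (fun u => heatK u (x - y)) (two_ne_zero) (s + t)
  rw [this, smul_eq_mul]
  congr 1
  rcases le_total s t with h | h
  · rw [min_eq_left h, abs_of_nonpos (by linarith)]; ring_nf
  · rw [min_eq_right h, abs_of_nonneg (by linarith)]; ring_nf

lemma sqrt_one_sub_exp_mono {z w : ℝ} (hz : 0 ≤ z) (hzw : z ≤ w) :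
    Real.sqrt z * (1 - Real.exp (-z)) ≤ Real.sqrt w * (1 - Real.exp (-w)) := by
  have h1 : Real.exp (-z) ≤ 1 := Real.exp_le_one_iff.2 (by linarith)
  exact mul_le_mul (Real.sqrt_le_sqrt hzw)
    (by have := Real.exp_le_exp.2 (neg_le_neg hzw); linarith)
    (by linarith) (Real.sqrt_nonneg w)

lemma heatK_diff_eq (d r : ℝ) (hd : d ≠ 0) (hr : 0 < r) :
    heatK r 0 - heatK r d = (Real.sqrt (Real.pi * d ^ 2))⁻¹ *
      (Real.sqrt (d ^ 2 / (2 * r)) * (1 - Real.exp (-(d ^ 2 / (2 * r))))) := by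
  have ha : (0:ℝ) < d ^ 2 := by positivity
  have h0 : heatK r 0 = (Real.sqrt (2 * Real.pi * r))⁻¹ := by
    unfold heatK; norm_num
  have hd' : heatK r d = (Real.sqrt (2 * Real.pi * r))⁻¹ * Real.exp (-(d ^ 2 / (2 * r))) := by
    unfold heatK; rw [neg_div]
  rw [h0, hd', show 2 * Real.pi * r = Real.pi * (2 * r) by ring,
    Real.sqrt_mul Real.pi_pos.le, Real.sqrt_div' _ ?h1, Real.sqrt_mul Real.pi_pos.le]
  case h1 => positivity
  have h2r : (0:ℝ) < Real.sqrt (2 * r) := Real.sqrt_pos.2 (by linarith)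
  have hd2 : (0:ℝ) < Real.sqrt (d ^ 2) := Real.sqrt_pos.2 (by positivity)
  have hpi : (0:ℝ) < Real.sqrt Real.pi := Real.sqrt_pos.2 Real.pi_pos
  field_simp

lemma heatK_diff_anti (d : ℝ) {u v : ℝ} (hu : 0 < u) (huv : u ≤ v) :
    heatK v 0 - heatK v d ≤ heatK u 0 - heatK u d := by
  rcases eq_or_ne d 0 with rfl | hd
  · simp
  have hv : 0 < v := lt_of_lt_of_le hu huv
  rw [heatK_diff_eq d u hd hu, heatK_diff_eq d v hd hv]
  apply mul_le_mul_of_nonneg_left _ (by positivity)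
  apply sqrt_one_sub_exp_mono (by positivity)
  apply div_le_div_of_nonneg_left (by positivity) (by linarith) (by linarith)

lemma heatV_le_main {s t : ℝ} (x y : ℝ) (hs : 0 < s) (hst : s ≤ t) :
    heatV s t x y ≤ 2 * ∫ u in (0:ℝ)..(t - s), (heatK u 0 - heatK u (x - y)) := by
  have ht : 0 < t := lt_of_lt_of_le hs hst
  set d := x - y with hd
  set τ := t - s with hτ
  have hτ0 : 0 ≤ τ := by simp [hτ]; linarith
  -- interval integral of the difference
  set I : ℝ → ℝ → ℝ := fun a b => ∫ u in a..b, (heatK u 0 - heatK u d) with hI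
  have intg : ∀ a b : ℝ, 0 ≤ a → 0 ≤ b →
      IntervalIntegrable (fun u => heatK u 0 - heatK u d) volume a b := fun a b ha hb =>
    (heatK_intervalIntegrable 0 a b ha hb).sub (heatK_intervalIntegrable d a b ha hb)
  -- rewrite the ten Q's
  have habs : |s - t| = τ := by rw [abs_of_nonpos (by linarith), hτ]; ring
  have e1 := heatQ_eq s x s x hs hs
  have e2 := heatQ_eq t x t x ht ht
  have e3 := heatQ_eq s y s y hs hs
  have e4 := heatQ_eq t y t y ht ht
  have e5 := heatQ_eq s x t x hs ht
  have e6 := heatQ_eq s x s y hs hs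
  have e7 := heatQ_eq s x t y hs ht
  have e8 := heatQ_eq t x s y ht hs
  have e9 := heatQ_eq t x t y ht ht
  have e10 := heatQ_eq s y t y hs ht
  simp only [sub_self, abs_zero, habs, abs_sub_comm t s] at e1 e2 e3 e4 e5 e6 e7 e8 e9 e10
  rw [show t + s = s + t by ring] at e8
  simp only [← hd] at e6 e7 e8 e9
  have h1 := heatK_intervalIntegrable 0 0 (s+s) le_rfl (by linarith)
  have h2 := heatK_intervalIntegrable d 0 (s+s) le_rfl (by linarith)
  have h3 := heatK_intervalIntegrable 0 0 (t+t) le_rfl (by linarith)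
  have h4 := heatK_intervalIntegrable d 0 (t+t) le_rfl (by linarith)
  have h5 := heatK_intervalIntegrable 0 τ (s+t) hτ0 (by linarith)
  have h6 := heatK_intervalIntegrable d τ (s+t) hτ0 (by linarith)
  have hV : heatV s t x y = I 0 (s+s) + I 0 (t+t) - 2 * I τ (s+t) := by
    simp only [hI]
    rw [intervalIntegral.integral_sub h1 h2, intervalIntegral.integral_sub h3 h4,
      intervalIntegral.integral_sub h5 h6]
    unfold heatV
    rw [e1, e2, e3, e4, e5, e6, e7, e8, e9, e10]
    ring
  -- additivity
  have a1 : I 0 τ + I τ (s+s) = I 0 (s+s) :=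
    intervalIntegral.integral_add_adjacent_intervals (intg 0 τ le_rfl hτ0)
      (intg τ (s+s) hτ0 (by linarith))
  have a2 : I 0 τ + I τ (t+t) = I 0 (t+t) :=
    intervalIntegral.integral_add_adjacent_intervals (intg 0 τ le_rfl hτ0)
      (intg τ (t+t) hτ0 (by linarith))
  have a3 : I τ (s+s) + I (s+s) (s+t) = I τ (s+t) :=
    intervalIntegral.integral_add_adjacent_intervals (intg τ (s+s) hτ0 (by linarith))
      (intg (s+s) (s+t) (by linarith) (by linarith))
  have a4 : I τ (s+t) + I (s+t) (t+t) = I τ (t+t) :=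
    intervalIntegral.integral_add_adjacent_intervals (intg τ (s+t) hτ0 (by linarith))
      (intg (s+t) (t+t) (by linarith) (by linarith))
  -- comparison of the two side intervals
  have hcomp : I (s+t) (t+t) = ∫ u in (s+s)..(s+t), (heatK (u+τ) 0 - heatK (u+τ) d) := by
    rw [intervalIntegral.integral_comp_add_right (fun u => heatK u 0 - heatK u d) τ]
    rw [show s+s+τ = s+t by rw [hτ]; ring, show s+t+τ = t+t by rw [hτ]; ring]
  have hshift : IntervalIntegrable (fun u => heatK (u+τ) 0 - heatK (u+τ) d) volume
      (s+s) (s+t) := by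
    have := (intg (s+t) (t+t) (by linarith) (by linarith)).comp_add_right τ
    rw [show s+t-τ = s+s by rw [hτ]; ring, show t+t-τ = s+t by rw [hτ]; ring] at this
    exact this
  have hmono : I (s+t) (t+t) ≤ I (s+s) (s+t) := by
    rw [hcomp]
    apply intervalIntegral.integral_mono_on (by linarith) hshift
      (intg (s+s) (s+t) (by linarith) (by linarith))
    intro u hu
    exact heatK_diff_anti d (by simp at hu; rcases hu with ⟨h,_⟩; linarith) (by linarith)
  have : heatV s t x y ≤ 2 * I 0 τ := by linarith
  simpa [hI] using this

lemma heatQ_comm (s x t y : ℝ) : heatQ s x t y = heatQ t x s y := by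
  unfold heatQ; rw [min_comm t s, add_comm t s]

lemma heatV_symm (s t x y : ℝ) : heatV s t x y = heatV t s x y := by
  unfold heatV
  rw [heatQ_comm t x s x, heatQ_comm t y s y]
  ring

lemma heatV_part_i (s t x y : ℝ) (hs : 0 < s) (ht : 0 < t) :
    heatV s t x y ≤ 2 * ∫ r in Ioc (0:ℝ) (|s - t|), (heatK r 0 - heatK r (x - y)) := by
  rcases le_total s t with h | h
  · rw [abs_of_nonpos (by linarith), neg_sub,
      ← intervalIntegral.integral_of_le (by linarith : (0:ℝ) ≤ t - s)]
    exact heatV_le_main x y hs h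
  · rw [heatV_symm, abs_of_nonneg (by linarith),
      ← intervalIntegral.integral_of_le (by linarith : (0:ℝ) ≤ s - t)]
    exact heatV_le_main x y ht h

lemma int_heatK_zero (b : ℝ) (hb : 0 ≤ b) :
    ∫ u in (0:ℝ)..b, heatK u 0 = (Real.sqrt (2*Real.pi))⁻¹ * (2 * Real.sqrt b) := by
  simp only [heatK_zero_eq]
  rw [intervalIntegral.integral_const_mul]
  open intervalIntegral in rw [integral_rpow (Or.inl (by norm_num))]
  simp only [Real.sqrt_eq_rpow]
  rw [show (-(1/2):ℝ) + 1 = 1/2 by norm_num,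
    Real.zero_rpow (by norm_num : (1/2:ℝ) ≠ 0)]
  ring

lemma int_diff_le_sqrt (d b : ℝ) (hb : 0 ≤ b) :
    ∫ u in (0:ℝ)..b, (heatK u 0 - heatK u d) ≤ (Real.sqrt (2*Real.pi))⁻¹ * (2 * Real.sqrt b) := by
  rw [← int_heatK_zero b hb]
  apply intervalIntegral.integral_mono_on hb
    ((heatK_intervalIntegrable 0 0 b le_rfl hb).sub (heatK_intervalIntegrable d 0 b le_rfl hb))
    (heatK_intervalIntegrable 0 0 b le_rfl hb)
  intro u _
  have := heatK_nonneg u d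
  linarith

lemma heatK_diff_le_rpow (d u : ℝ) (hu : 0 < u) :
    heatK u 0 - heatK u d ≤ ((Real.sqrt (2*Real.pi))⁻¹ * (d^2/2)) * u ^ (-(3/2) : ℝ) := by
  have h0 : heatK u 0 = (Real.sqrt (2*Real.pi*u))⁻¹ := by unfold heatK; norm_num
  have hKd : heatK u d = (Real.sqrt (2*Real.pi*u))⁻¹ * Real.exp (-(d^2/(2*u))) := by
    unfold heatK; rw [neg_div]
  have h1 : 1 - Real.exp (-(d^2/(2*u))) ≤ d^2/(2*u) := by
    have := Real.add_one_le_exp (-(d^2/(2*u))); linarith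
  have hmul : u ^ (-(1/2):ℝ) * u⁻¹ = u ^ (-(3/2):ℝ) := by
    rw [← Real.rpow_neg_one u, ← Real.rpow_add hu]; norm_num
  calc heatK u 0 - heatK u d
      = (Real.sqrt (2*Real.pi*u))⁻¹ * (1 - Real.exp (-(d^2/(2*u)))) := by rw [h0, hKd]; ring
    _ ≤ (Real.sqrt (2*Real.pi*u))⁻¹ * (d^2/(2*u)) :=
        mul_le_mul_of_nonneg_left h1 (by positivity)
    _ = ((Real.sqrt (2*Real.pi))⁻¹ * (d^2/2)) * u ^ (-(3/2) : ℝ) := by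
        rw [← h0, heatK_zero_eq, ← hmul]
        field_simp

lemma int_diff_le_abs (d b : ℝ) (hb : 0 ≤ b) :
    ∫ u in (0:ℝ)..b, (heatK u 0 - heatK u d) ≤ 2 * |d| := by
  rcases eq_or_ne d 0 with rfl | hd
  · simp
  have hd2 : (0:ℝ) < d^2/2 := by positivity
  have habs : (0:ℝ) < |d| := abs_pos.2 hd
  have h2pi : (2:ℝ) ≤ Real.sqrt (2*Real.pi) := by
    have h4 : Real.sqrt 4 = 2 := by
      rw [show (4:ℝ) = 2^2 by norm_num, Real.sqrt_sq (by norm_num : (0:ℝ) ≤ 2)]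
    calc (2:ℝ) = Real.sqrt 4 := h4.symm
      _ ≤ Real.sqrt (2*Real.pi) := Real.sqrt_le_sqrt (by nlinarith [Real.pi_gt_three])
  have hinv : (Real.sqrt (2*Real.pi))⁻¹ ≤ 2⁻¹ := by
    apply inv_anti₀ (by norm_num) h2pi
  have hsq : Real.sqrt (d^2/2) ≤ |d| := by
    calc Real.sqrt (d^2/2) ≤ Real.sqrt (d^2) := Real.sqrt_le_sqrt (by nlinarith)
      _ = |d| := Real.sqrt_sq_eq_abs d
  have hsqb : ∀ c : ℝ, 0 ≤ c → Real.sqrt c ≤ |d| →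
      (Real.sqrt (2*Real.pi))⁻¹ * (2 * Real.sqrt c) ≤ |d| := by
    intro c hc hcd
    have h1 : (Real.sqrt (2*Real.pi))⁻¹ * (2 * Real.sqrt c) ≤ 2⁻¹ * (2 * |d|) := by
      apply mul_le_mul hinv (by linarith) (by positivity) (by norm_num)
    linarith
  rcases le_total b (d^2/2) with hcase | hcase
  · have h1 := int_diff_le_sqrt d b hb
    have h2 : Real.sqrt b ≤ |d| := le_trans (Real.sqrt_le_sqrt hcase) hsq
    have := hsqb b hb h2
    linarith
  · set a := d^2/2 with ha
    have hsplit : (∫ u in (0:ℝ)..a, (heatK u 0 - heatK u d))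
        + (∫ u in a..b, (heatK u 0 - heatK u d)) = ∫ u in (0:ℝ)..b, (heatK u 0 - heatK u d) :=
      intervalIntegral.integral_add_adjacent_intervals
        ((heatK_intervalIntegrable 0 0 a le_rfl hd2.le).sub
          (heatK_intervalIntegrable d 0 a le_rfl hd2.le))
        ((heatK_intervalIntegrable 0 a b hd2.le hb).sub
          (heatK_intervalIntegrable d a b hd2.le hb))
    have hp1 : (∫ u in (0:ℝ)..a, (heatK u 0 - heatK u d)) ≤ |d| := by
      have := int_diff_le_sqrt d a hd2.le
      have h2 := hsqb a hd2.le hsq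
      linarith
    -- second piece
    have hnot : (0:ℝ) ∉ Set.uIcc a b := by
      rw [Set.uIcc_of_le hcase]
      rintro ⟨h1, _⟩; linarith
    have hmaj : IntervalIntegrable
        (fun u : ℝ => ((Real.sqrt (2*Real.pi))⁻¹ * (d^2/2)) * u ^ (-(3/2) : ℝ)) volume a b :=
      (intervalIntegral.intervalIntegrable_rpow (Or.inr hnot)).const_mul _
    have hmono2 : (∫ u in a..b, (heatK u 0 - heatK u d)) ≤
        ∫ u in a..b, ((Real.sqrt (2*Real.pi))⁻¹ * (d^2/2)) * u ^ (-(3/2) : ℝ) := by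
      apply intervalIntegral.integral_mono_on hcase
        ((heatK_intervalIntegrable 0 a b hd2.le hb).sub
          (heatK_intervalIntegrable d a b hd2.le hb)) hmaj
      intro u hu
      exact heatK_diff_le_rpow d u (lt_of_lt_of_le hd2 hu.1)
    have hval : (∫ u in a..b, u ^ (-(3/2) : ℝ)) =
        (b ^ (-(1/2):ℝ) - a ^ (-(1/2):ℝ)) / (-(1/2)) := by
      open intervalIntegral in
        rw [integral_rpow (Or.inr ⟨by norm_num, hnot⟩)]
      norm_num
    have hrw : a ^ (-(1/2):ℝ) = (Real.sqrt a)⁻¹ := by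
      rw [Real.rpow_neg hd2.le, ← Real.sqrt_eq_rpow]
    have hbpos : 0 ≤ b ^ (-(1/2):ℝ) := Real.rpow_nonneg hb _
    have hsa : Real.sqrt a * Real.sqrt a = a := Real.mul_self_sqrt hd2.le
    have hsapos : 0 < Real.sqrt a := Real.sqrt_pos.2 hd2
    have hp2 : (∫ u in a..b, (heatK u 0 - heatK u d)) ≤ |d| := by
      have e1 : (∫ u in a..b, ((Real.sqrt (2*Real.pi))⁻¹ * (d^2/2)) * u ^ (-(3/2) : ℝ))
          = ((Real.sqrt (2*Real.pi))⁻¹ * a) * ((b ^ (-(1/2):ℝ) - a ^ (-(1/2):ℝ)) / (-(1/2))) := by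
        rw [intervalIntegral.integral_const_mul, hval, ha]
      have e2 : ((Real.sqrt (2*Real.pi))⁻¹ * a) * ((b ^ (-(1/2):ℝ) - a ^ (-(1/2):ℝ)) / (-(1/2)))
          ≤ (Real.sqrt (2*Real.pi))⁻¹ * (2 * Real.sqrt a) := by
        have e3 : a * ((b ^ (-(1/2):ℝ) - a ^ (-(1/2):ℝ)) / (-(1/2))) ≤ 2 * Real.sqrt a := by
          have e4 : a * (a ^ (-(1/2):ℝ)) = Real.sqrt a := by
            rw [hrw]; field_simp; rw [Real.sq_sqrt hd2.le]
          nlinarith [mul_nonneg (le_of_lt hd2) hbpos]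
        calc ((Real.sqrt (2*Real.pi))⁻¹ * a) * ((b ^ (-(1/2):ℝ) - a ^ (-(1/2):ℝ)) / (-(1/2)))
            = (Real.sqrt (2*Real.pi))⁻¹ * (a * ((b ^ (-(1/2):ℝ) - a ^ (-(1/2):ℝ)) / (-(1/2)))) := by
              ring
          _ ≤ (Real.sqrt (2*Real.pi))⁻¹ * (2 * Real.sqrt a) :=
              mul_le_mul_of_nonneg_left e3 (by positivity)
      have := hsqb a hd2.le hsq
      linarith
    linarith

lemma sqrt_two_pi_inv_le : (Real.sqrt (2*Real.pi))⁻¹ ≤ 2⁻¹ := by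
  apply inv_anti₀ (by norm_num)
  have h4 : Real.sqrt 4 = 2 := by
    rw [show (4:ℝ) = 2^2 by norm_num, Real.sqrt_sq (by norm_num : (0:ℝ) ≤ 2)]
  calc (2:ℝ) = Real.sqrt 4 := h4.symm
    _ ≤ Real.sqrt (2*Real.pi) := Real.sqrt_le_sqrt (by nlinarith [Real.pi_gt_three])

/-- **Bounds on the increment variance for the stochastic heat equation.**
(i) For all `s, t > 0` and `x, y`, `V(s,t,x,y) ≤ 2∫₀^{|s−t|} [p_r(0) − p_r(x−y)] dr`;
(ii) for every `α ∈ [0,1/2]` there is a constant `c_α` (independent of `s,t,x,y`)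
with `V(s,t,x,y) ≤ c_α |x−y|^{2α} |s−t|^{1/2−α}`. -/
theorem heatV_bounds :
    (∀ s t x y : ℝ, 0 < s → 0 < t →
      heatV s t x y ≤ 2 * ∫ r in Ioc (0:ℝ) (|s - t|), (heatK r 0 - heatK r (x - y))) ∧
    ∀ α : ℝ, α ∈ Icc (0:ℝ) (1/2) →
      ∃ c : ℝ, ∀ s t x y : ℝ, 0 < s → 0 < t →
        heatV s t x y ≤ c * |x - y| ^ (2 * α) * |s - t| ^ (1/2 - α) := by
  constructor
  · exact fun s t x y hs ht => heatV_part_i s t x y hs ht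
  intro α hα
  obtain ⟨hα0, hα1⟩ := hα
  refine ⟨16, fun s t x y hs ht => ?_⟩
  set τ := |s - t| with hτdef
  set D := |x - y| with hDdef
  have hτ0 : (0:ℝ) ≤ τ := abs_nonneg _
  have hD0 : (0:ℝ) ≤ D := abs_nonneg _
  have hI : heatV s t x y ≤ 2 * ∫ u in (0:ℝ)..τ, (heatK u 0 - heatK u (x-y)) := by
    have h := heatV_part_i s t x y hs ht
    rwa [← intervalIntegral.integral_of_le hτ0] at h
  have hA : heatV s t x y ≤ 2 * Real.sqrt τ := by
    have h1 := int_diff_le_sqrt (x-y) τ hτ0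
    have h2 : (Real.sqrt (2*Real.pi))⁻¹ * (2 * Real.sqrt τ) ≤ 2⁻¹ * (2 * Real.sqrt τ) :=
      mul_le_mul_of_nonneg_right sqrt_two_pi_inv_le (by positivity)
    have h3 : (2:ℝ)⁻¹ * (2 * Real.sqrt τ) = Real.sqrt τ := by ring
    linarith
  have hB : heatV s t x y ≤ 4 * D := by
    have h1 := int_diff_le_abs (x-y) τ hτ0
    rw [← hDdef] at h1
    linarith
  have pos1 : 0 ≤ D ^ (2*α) := Real.rpow_nonneg hD0 _
  have pos2 : 0 ≤ τ ^ (1/2-α) := Real.rpow_nonneg hτ0 _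
  rcases le_or_gt (heatV s t x y) 0 with hV | hV
  · nlinarith
  have hV0 : 0 ≤ heatV s t x y := hV.le
  have key : heatV s t x y = heatV s t x y ^ (2*α) * heatV s t x y ^ (1 - 2*α) := by
    rw [← Real.rpow_add hV, show 2*α + (1-2*α) = (1:ℝ) by ring, Real.rpow_one]
  have k1 : heatV s t x y ^ (2*α) ≤ (4*D) ^ (2*α) :=
    Real.rpow_le_rpow hV0 hB (by linarith)
  have k2 : heatV s t x y ^ (1-2*α) ≤ (2*Real.sqrt τ) ^ (1-2*α) :=
    Real.rpow_le_rpow hV0 hA (by linarith)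
  have k3 : (4*D) ^ (2*α) = (4:ℝ)^(2*α) * D^(2*α) := Real.mul_rpow (by norm_num) hD0
  have k4 : (2*Real.sqrt τ) ^ (1-2*α) = (2:ℝ)^(1-2*α) * (Real.sqrt τ)^(1-2*α) :=
    Real.mul_rpow (by norm_num) (Real.sqrt_nonneg τ)
  have k5 : (4:ℝ)^(2*α) ≤ 4 := by
    calc (4:ℝ)^(2*α) ≤ (4:ℝ)^(1:ℝ) :=
          Real.rpow_le_rpow_of_exponent_le (by norm_num) (by linarith)
      _ = 4 := Real.rpow_one 4
  have k6 : (2:ℝ)^(1-2*α) ≤ 2 := by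
    calc (2:ℝ)^(1-2*α) ≤ (2:ℝ)^(1:ℝ) :=
          Real.rpow_le_rpow_of_exponent_le (by norm_num) (by linarith)
      _ = 2 := Real.rpow_one 2
  have k7 : (Real.sqrt τ)^(1-2*α) = τ^(1/2-α) := by
    rw [Real.sqrt_eq_rpow, ← Real.rpow_mul hτ0, show (1/2)*(1-2*α) = 1/2-α by ring]
  have c1 : heatV s t x y ≤ ((4:ℝ)^(2*α) * D^(2*α)) * ((2:ℝ)^(1-2*α) * τ^(1/2-α)) := by
    calc heatV s t x y = heatV s t x y ^ (2*α) * heatV s t x y ^ (1 - 2*α) := key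
      _ ≤ (4*D) ^ (2*α) * (2*Real.sqrt τ) ^ (1-2*α) :=
          mul_le_mul k1 k2 (Real.rpow_nonneg hV0 _) (Real.rpow_nonneg (by linarith) _)
      _ = ((4:ℝ)^(2*α) * D^(2*α)) * ((2:ℝ)^(1-2*α) * τ^(1/2-α)) := by rw [k3, k4, k7]
  have c2 : ((4:ℝ)^(2*α) * D^(2*α)) * ((2:ℝ)^(1-2*α) * τ^(1/2-α)) ≤
      (4 * D^(2*α)) * (2 * τ^(1/2-α)) := by
    apply mul_le_mul (mul_le_mul_of_nonneg_right k5 pos1)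
      (mul_le_mul_of_nonneg_right k6 pos2)
      (mul_nonneg (Real.rpow_nonneg (by norm_num) _) pos2)
      (by positivity)
  nlinarith
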